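/- Suppose P and Q are n×n real matrices, P is essentially nonnegative (all off-diagonal entries nonnegative), Q is nonnegative and nonzero, and P + Q is irreducible. Then s(P+Q) > s(P), where s(·) denotes the spectral bound (maximum of the real parts of eigenvalues). -/

import Mathlib

open Matrix

/-- Spectral bound: maximum real part of the (complex) eigenvalues. -/
noncomputable def specBound {n : ℕ} (M : Matrix (Fin n) (Fin n) ℝ) : ℝ :=
  sSup {t : ℝ | ∃ μ ∈ spectrum ℂ (M.map Complex.ofReal), μ.re = t}

/-- Irreducibility of a matrix (no nontrivial invariant subset of indices). -/
def MatIrreducible {n : ℕ} (M : Matrix (Fin n) (Fin n) ℝ) : Prop :=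
  ∀ S : Finset (Fin n), S.Nonempty → S ≠ Finset.univ →
    ∃ i ∈ S, ∃ j, j ∉ S ∧ M j i ≠ 0

section PFaux
open Polynomial

variable {n : ℕ}

lemma mem_spec_iff_det (N : Matrix (Fin n) (Fin n) ℂ) (μ : ℂ) :
    μ ∈ spectrum ℂ N ↔ (μ • (1 : Matrix (Fin n) (Fin n) ℂ) - N).det = 0 := by
  rw [spectrum.mem_iff, Algebra.algebraMap_eq_smul_one, Matrix.isUnit_iff_isUnit_det,
    isUnit_iff_ne_zero, not_not]

lemma charpoly_eval (N : Matrix (Fin n) (Fin n) ℂ) (μ : ℂ) :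
    N.charpoly.eval μ = (μ • (1 : Matrix (Fin n) (Fin n) ℂ) - N).det := by
  rw [Matrix.charpoly, ← Polynomial.coe_evalRingHom, RingHom.map_det]
  congr 1
  ext i j
  by_cases h : i = j
  · subst h; simp [charmatrix_apply_eq]
  · simp [charmatrix_apply_ne _ _ _ h, Matrix.one_apply_ne h]

lemma spec_eq_roots (N : Matrix (Fin n) (Fin n) ℂ) :
    spectrum ℂ N = {μ | N.charpoly.IsRoot μ} := by
  ext μ
  rw [mem_spec_iff_det, Set.mem_setOf_eq, IsRoot.def, charpoly_eval]

lemma spec_finite (N : Matrix (Fin n) (Fin n) ℂ) : (spectrum ℂ N).Finite := by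
  rw [spec_eq_roots]
  exact Polynomial.finite_setOf_isRoot N.charpoly_monic.ne_zero

lemma spec_nonempty (hn : 0 < n) (N : Matrix (Fin n) (Fin n) ℂ) :
    (spectrum ℂ N).Nonempty := by
  rw [spec_eq_roots]
  have h1 : N.charpoly.natDegree = n := by
    rw [Matrix.charpoly_natDegree_eq_dim, Fintype.card_fin]
  have h2 : 0 < N.charpoly.degree := by
    rw [Polynomial.degree_eq_natDegree N.charpoly_monic.ne_zero, h1]
    exact_mod_cast hn
  obtain ⟨z, hz⟩ := Complex.exists_root h2
  exact ⟨z, hz⟩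

lemma reSet_eq (M : Matrix (Fin n) (Fin n) ℝ) :
    {t : ℝ | ∃ μ ∈ spectrum ℂ (M.map Complex.ofReal), μ.re = t}
      = Complex.re '' spectrum ℂ (M.map Complex.ofReal) := by
  ext t; simp [Set.mem_image]

lemma re_le_specBound (M : Matrix (Fin n) (Fin n) ℝ) {μ : ℂ}
    (hμ : μ ∈ spectrum ℂ (M.map Complex.ofReal)) : μ.re ≤ specBound M := by
  apply le_csSup
  · rw [reSet_eq]
    exact ((spec_finite _).image _).bddAbove
  · exact ⟨μ, hμ, rfl⟩

lemma specBound_mem (hn : 0 < n) (M : Matrix (Fin n) (Fin n) ℝ) :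
    ∃ μ ∈ spectrum ℂ (M.map Complex.ofReal), μ.re = specBound M := by
  have h := Set.Nonempty.csSup_mem (s := {t : ℝ | ∃ μ ∈ spectrum ℂ (M.map Complex.ofReal), μ.re = t}) ?_ ?_
  · exact h
  · obtain ⟨μ, hμ⟩ := spec_nonempty hn (M.map Complex.ofReal)
    exact ⟨μ.re, μ, hμ, rfl⟩
  · rw [reSet_eq]; exact (spec_finite _).image _

lemma irr_transpose {M : Matrix (Fin n) (Fin n) ℝ} (h : MatIrreducible M) :
    MatIrreducible Mᵀ := by
  intro S hS hSne
  have h1 : (Sᶜ : Finset (Fin n)).Nonempty := by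
    rw [Finset.nonempty_iff_ne_empty]
    intro hc
    exact hSne (by simpa [Finset.compl_eq_empty_iff] using hc)
  have h2 : (Sᶜ : Finset (Fin n)) ≠ Finset.univ := by
    intro hc
    obtain ⟨x, hx⟩ := hS
    have : x ∈ (Sᶜ : Finset (Fin n)) := hc ▸ Finset.mem_univ x
    simp [Finset.mem_compl] at this
    exact this hx
  obtain ⟨i, hi, j, hj, hij⟩ := h Sᶜ h1 h2
  refine ⟨j, by simpa [Finset.mem_compl, not_not] using hj, i, ?_, ?_⟩
  · simpa [Finset.mem_compl] using hi
  · simpa [Matrix.transpose_apply] using hij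

lemma mulVec_nonneg {M : Matrix (Fin n) (Fin n) ℝ} (hM : ∀ i j, 0 ≤ M i j)
    {u : Fin n → ℝ} (hu : ∀ i, 0 ≤ u i) : ∀ i, 0 ≤ (M *ᵥ u) i := by
  intro i
  simp only [Matrix.mulVec, dotProduct]
  exact Finset.sum_nonneg fun j _ => mul_nonneg (hM i j) (hu j)

lemma single_le_mulVec {M : Matrix (Fin n) (Fin n) ℝ} (hM : ∀ i j, 0 ≤ M i j)
    {u : Fin n → ℝ} (hu : ∀ i, 0 ≤ u i) (i j : Fin n) :
    M i j * u j ≤ (M *ᵥ u) i := by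
  simp only [Matrix.mulVec, dotProduct]
  exact Finset.single_le_sum (fun l _ => mul_nonneg (hM i l) (hu l)) (Finset.mem_univ j)

lemma pow_mulVec_pos {B : Matrix (Fin n) (Fin n) ℝ} (hB : ∀ i j, 0 ≤ B i j)
    (hirr : MatIrreducible B) :
    ∀ (k : ℕ) (u : Fin n → ℝ), (∀ i, 0 ≤ u i) → u ≠ 0 →
      n ≤ k + (Finset.univ.filter fun i => u i ≠ 0).card →
      ∀ i, 0 < (((1 + B) ^ k) *ᵥ u) i := by
  intro k
  induction k with
  | zero =>
    intro u hu hune hcard i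
    have hc : (Finset.univ.filter fun i => u i ≠ 0).card = Fintype.card (Fin n) := by
      have := Finset.card_le_univ (Finset.univ.filter fun i => u i ≠ 0)
      simp only [Fintype.card_fin] at *
      omega
    have huniv := Finset.eq_univ_of_card _ hc
    have hi : u i ≠ 0 := by
      have : i ∈ Finset.univ.filter fun i => u i ≠ 0 := by
        rw [huniv]; exact Finset.mem_univ i
      simpa using this
    have : ((1 + B) ^ 0) *ᵥ u = u := by rw [pow_zero, Matrix.one_mulVec]
    rw [this]
    exact (hu i).lt_of_ne (Ne.symm hi)
  | succ k ih =>
    intro u hu hune hcard i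
    set u' := (1 + B) *ᵥ u with hu'def
    have hadd : ∀ j, u' j = u j + (B *ᵥ u) j := by
      intro j
      simp [hu'def, Matrix.add_mulVec, Matrix.one_mulVec]
    have hle : ∀ j, u j ≤ u' j := by
      intro j
      rw [hadd j]
      have := mulVec_nonneg hB hu j
      linarith
    have hu' : ∀ j, 0 ≤ u' j := fun j => le_trans (hu j) (hle j)
    have hsub : (Finset.univ.filter fun i => u i ≠ 0)
        ⊆ (Finset.univ.filter fun i => u' i ≠ 0) := by
      intro j hj
      simp only [Finset.mem_filter, Finset.mem_univ, true_and] at hj ⊢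
      intro hc
      exact hj (le_antisymm (hc ▸ hle j) (hu j))
    have hune' : u' ≠ 0 := by
      obtain ⟨j, hj⟩ := Function.ne_iff.mp hune
      intro hc
      have hj' : u' j = 0 := by rw [hc]; rfl
      have := hle j
      rw [hj'] at this
      exact hj (le_antisymm this (hu j))
    have hcard' : n ≤ k + (Finset.univ.filter fun i => u' i ≠ 0).card := by
      by_cases huniv : (Finset.univ.filter fun i => u i ≠ 0) = Finset.univ
      · have h2 : (Finset.univ.filter fun i => u' i ≠ 0) = Finset.univ := by
          have h1 := hsub
          rw [huniv] at h1
          exact Finset.univ_subset_iff.mp h1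
        have h3 := congrArg Finset.card h2
        simp only [Finset.card_univ, Fintype.card_fin] at h3
        omega
      · have hSne : (Finset.univ.filter fun i => u i ≠ 0).Nonempty := by
          obtain ⟨j, hj⟩ := Function.ne_iff.mp hune
          exact ⟨j, by simpa using hj⟩
        obtain ⟨i0, hi0, j0, hj0, hBij⟩ := hirr _ hSne huniv
        have hui0 : 0 < u i0 := by
          simp only [Finset.mem_filter, Finset.mem_univ, true_and] at hi0
          exact (hu i0).lt_of_ne (Ne.symm hi0)
        have hj0mem : j0 ∈ Finset.univ.filter fun i => u' i ≠ 0 := by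
          simp only [Finset.mem_filter, Finset.mem_univ, true_and]
          have h1 : 0 < B j0 i0 * u i0 :=
            mul_pos ((hB j0 i0).lt_of_ne (Ne.symm hBij)) hui0
          have h2 := single_le_mulVec hB hu j0 i0
          have h3 := hadd j0
          have h4 := hu j0
          intro hc
          rw [hc] at h3
          linarith
        have hss : (Finset.univ.filter fun i => u i ≠ 0)
            ⊂ (Finset.univ.filter fun i => u' i ≠ 0) :=
          (Finset.ssubset_iff_of_subset hsub).mpr ⟨j0, hj0mem, hj0⟩
        have := Finset.card_lt_card hss
        omega
    have hrw : ((1 + B) ^ (k + 1)) *ᵥ u = ((1 + B) ^ k) *ᵥ u' := by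
      rw [pow_succ, ← Matrix.mulVec_mulVec]
    rw [hrw]
    exact ih u' hu' hune' hcard' i

lemma C_mulVec_pos (hn : 0 < n) {B : Matrix (Fin n) (Fin n) ℝ} (hB : ∀ i j, 0 ≤ B i j)
    (hirr : MatIrreducible B) {u : Fin n → ℝ} (hu : ∀ i, 0 ≤ u i) (hune : u ≠ 0) :
    ∀ i, 0 < (((1 + B) ^ (n - 1)) *ᵥ u) i := by
  apply pow_mulVec_pos hB hirr
  · exact hu
  · exact hune
  · have : (Finset.univ.filter fun i => u i ≠ 0).Nonempty := by
      obtain ⟨j, hj⟩ := Function.ne_iff.mp hune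
      exact ⟨j, by simpa using hj⟩
    have := Finset.card_pos.mpr this
    omega

lemma C_entry_pos (hn : 0 < n) {B : Matrix (Fin n) (Fin n) ℝ} (hB : ∀ i j, 0 ≤ B i j)
    (hirr : MatIrreducible B) (i j : Fin n) : 0 < ((1 + B) ^ (n - 1)) i j := by
  have h := C_mulVec_pos hn hB hirr (u := Pi.single j 1)
    (fun l => by by_cases h : l = j <;> simp [Pi.single_apply, h]) ?_ i
  · rwa [Matrix.mulVec_single_one] at h
  · intro hc
    have := congrFun hc j
    simp at this

lemma exists_pos_eigenvector (hn : 0 < n) {B' : Matrix (Fin n) (Fin n) ℝ}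
    (hB : ∀ i j, 0 ≤ B' i j) (hirr : MatIrreducible B') :
    ∃ (w : Fin n → ℝ) (r : ℝ), (∀ i, 0 < w i) ∧ 0 ≤ r ∧ B' *ᵥ w = r • w := by
  have hne : Nonempty (Fin n) := ⟨⟨0, hn⟩⟩
  have i₀ : Fin n := ⟨0, hn⟩
  have hune : (Finset.univ : Finset (Fin n)).Nonempty := Finset.univ_nonempty
  have hpne : (Finset.univ : Finset (Fin n × Fin n)).Nonempty := Finset.univ_nonempty
  set C := (1 + B') ^ (n - 1) with hCdef
  have hCpos : ∀ i j, 0 < C i j := C_entry_pos hn hB hirr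
  have hCnn : ∀ i j, 0 ≤ C i j := fun i j => (hCpos i j).le
  have hCmv : ∀ (u : Fin n → ℝ), (∀ i, 0 ≤ u i) → u ≠ 0 → ∀ i, 0 < (C *ᵥ u) i :=
    fun u hu hune => C_mulVec_pos hn hB hirr hu hune
  set cmin := Finset.univ.inf' hpne (fun p : Fin n × Fin n => C p.1 p.2) with hcmin
  have hcminle : ∀ i j, cmin ≤ C i j := fun i j =>
    Finset.inf'_le _ (Finset.mem_univ (i, j))
  have hcminpos : 0 < cmin := by
    obtain ⟨p, -, hp⟩ := Finset.exists_mem_eq_inf' hpne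
      (fun p : Fin n × Fin n => C p.1 p.2)
    rw [hcmin, hp]
    exact hCpos p.1 p.2
  set S₀ := ∑ j, B' i₀ j * (∑ l, C j l) with hS₀
  set R₀ := S₀ / cmin with hR₀
  have hS₀nn : 0 ≤ S₀ :=
    Finset.sum_nonneg fun j _ => mul_nonneg (hB i₀ j)
      (Finset.sum_nonneg fun l _ => hCnn j l)
  have hR₀nn : 0 ≤ R₀ := div_nonneg hS₀nn hcminpos.le
  -- a priori bound
  have hapr : ∀ u : Fin n → ℝ, (∀ i, 0 ≤ u i) → (∑ i, u i) = 1 →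
      ∀ r : ℝ, (∀ i, r * (C *ᵥ u) i ≤ (B' *ᵥ (C *ᵥ u)) i) → r ≤ R₀ := by
    intro u hu hsum r hcon
    have hul : ∀ l, u l ≤ 1 := by
      intro l
      calc u l ≤ ∑ i, u i := Finset.single_le_sum (fun i _ => hu i) (Finset.mem_univ l)
      _ = 1 := hsum
    have hCu_le : ∀ j, (C *ᵥ u) j ≤ ∑ l, C j l := by
      intro j
      simp only [Matrix.mulVec, dotProduct]
      apply Finset.sum_le_sum
      intro l _
      calc C j l * u l ≤ C j l * 1 :=
            mul_le_mul_of_nonneg_left (hul l) (hCnn j l)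
      _ = C j l := mul_one _
    have hCu_ge : cmin ≤ (C *ᵥ u) i₀ := by
      have h1 : ∑ l, cmin * u l ≤ (C *ᵥ u) i₀ := by
        simp only [Matrix.mulVec, dotProduct]
        exact Finset.sum_le_sum fun l _ =>
          mul_le_mul_of_nonneg_right (hcminle i₀ l) (hu l)
      rwa [← Finset.mul_sum, hsum, mul_one] at h1
    have h2 : (B' *ᵥ (C *ᵥ u)) i₀ ≤ S₀ := by
      simp only [Matrix.mulVec, dotProduct]
      exact Finset.sum_le_sum fun j _ =>
        mul_le_mul_of_nonneg_left (hCu_le j) (hB i₀ j)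
    by_cases hr : 0 ≤ r
    · have h3 : r * cmin ≤ S₀ := by
        calc r * cmin ≤ r * (C *ᵥ u) i₀ := mul_le_mul_of_nonneg_left hCu_ge hr
        _ ≤ (B' *ᵥ (C *ᵥ u)) i₀ := hcon i₀
        _ ≤ S₀ := h2
      rw [hR₀, le_div_iff₀ hcminpos]
      exact h3
    · linarith [hR₀nn]
  -- the compact set
  set T : Set ((Fin n → ℝ) × ℝ) :=
    {p | (∀ i, 0 ≤ p.1 i) ∧ (∑ i, p.1 i) = 1 ∧ 0 ≤ p.2 ∧ p.2 ≤ R₀ + 1 ∧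
      ∀ i, p.2 * (C *ᵥ p.1) i ≤ (B' *ᵥ (C *ᵥ p.1)) i} with hT
  have hclosed : IsClosed T := by
    rw [hT]
    simp only [Set.setOf_and, Set.setOf_forall]
    refine IsClosed.inter ?_ (IsClosed.inter ?_ (IsClosed.inter ?_ (IsClosed.inter ?_ ?_)))
    · exact isClosed_iInter fun i => isClosed_le continuous_const (by fun_prop)
    · exact isClosed_eq (by fun_prop) continuous_const
    · exact isClosed_le continuous_const continuous_snd
    · exact isClosed_le continuous_snd continuous_const
    · refine isClosed_iInter fun i => isClosed_le ?_ ?_ <;>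
        (simp only [Matrix.mulVec, dotProduct]; fun_prop)
  -- compactness
  have hsubset : T ⊆ (Set.univ.pi fun _ : Fin n => Set.Icc (0:ℝ) 1) ×ˢ Set.Icc 0 (R₀ + 1) := by
    rintro ⟨u, r⟩ ⟨h1, h2, h3, h4, -⟩
    constructor
    · intro i _
      refine ⟨h1 i, ?_⟩
      calc u i ≤ ∑ j, u j := Finset.single_le_sum (fun j _ => h1 j) (Finset.mem_univ i)
      _ = 1 := h2
    · exact ⟨h3, h4⟩
  have hcompact : IsCompact T :=
    IsCompact.of_isClosed_subset
      ((isCompact_univ_pi fun _ => isCompact_Icc).prod isCompact_Icc) hclosed hsubset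
  have hTne : T.Nonempty := by
    refine ⟨(fun _ => (n : ℝ)⁻¹, 0), fun i => by positivity, ?_, le_refl 0, by linarith, ?_⟩
    · rw [Finset.sum_const, Finset.card_univ, Fintype.card_fin, nsmul_eq_mul,
        mul_inv_cancel₀ (by exact_mod_cast hn.ne')]
    · intro i
      rw [zero_mul]
      exact mulVec_nonneg hB (mulVec_nonneg hCnn fun j => by positivity) i
  obtain ⟨⟨u₀, r⟩, hmem, hmax'⟩ := hcompact.exists_isMaxOn hTne continuous_snd.continuousOn
  have hmax : ∀ p ∈ T, p.2 ≤ r := fun p hp => hmax' hp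
  obtain ⟨hu₀, hsum, hr0, -, hcon⟩ := hmem
  have hu₀ne : u₀ ≠ 0 := by
    intro hc
    rw [hc] at hsum
    simp at hsum
  set w := C *ᵥ u₀ with hwdef
  have hw : ∀ i, 0 < w i := hCmv u₀ hu₀ hu₀ne
  have hwne : w ≠ 0 := by
    intro hc
    have := hw ⟨0, hn⟩
    rw [hc] at this
    exact lt_irrefl _ this
  refine ⟨w, r, hw, hr0, ?_⟩
  by_contra hnoteq
  set x := B' *ᵥ w - r • w with hxdef
  have hx0 : ∀ i, 0 ≤ x i := by
    intro i
    have := hcon i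
    simp only [hxdef, Pi.sub_apply, Pi.smul_apply, smul_eq_mul]
    linarith
  have hxne : x ≠ 0 := by
    intro hc
    exact hnoteq (by rwa [hxdef, sub_eq_zero] at hc)
  have hCx : ∀ i, 0 < (C *ᵥ x) i := hCmv x hx0 hxne
  set w' := C *ᵥ w with hw'def
  have hw' : ∀ i, 0 < w' i := hCmv w (fun i => (hw i).le) hwne
  have hcomm : C * B' = B' * C :=
    (((Commute.one_left B').add_left (Commute.refl B')).pow_left (n - 1))
  have hkey : B' *ᵥ w' - r • w' = C *ᵥ x := by
    rw [hxdef, Matrix.mulVec_sub, Matrix.mulVec_smul, hw'def,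
      Matrix.mulVec_mulVec, ← hcomm, ← Matrix.mulVec_mulVec]
  set mn := Finset.univ.inf' hune fun i => (C *ᵥ x) i with hmn
  set mx := Finset.univ.sup' hune fun i => w' i with hmx
  have hmnpos : 0 < mn := by
    obtain ⟨i, -, hi⟩ := Finset.exists_mem_eq_inf' hune fun i => (C *ᵥ x) i
    rw [hmn, hi]
    exact hCx i
  have hmxpos : 0 < mx := by
    obtain ⟨i, -, hi⟩ := Finset.exists_mem_eq_sup' hune fun i => w' i
    rw [hmx, hi]
    exact hw' i
  set ε := mn / mx with hε
  have hεpos : 0 < ε := div_pos hmnpos hmxpos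
  have hstep : ∀ i, (r + ε) * w' i ≤ (B' *ᵥ w') i := by
    intro i
    have h1 : (B' *ᵥ w') i = r * w' i + (C *ᵥ x) i := by
      have := congrFun hkey i
      simp only [Pi.sub_apply, Pi.smul_apply, smul_eq_mul] at this
      linarith
    have h2 : ε * w' i ≤ (C *ᵥ x) i := by
      calc ε * w' i ≤ ε * mx :=
            mul_le_mul_of_nonneg_left (Finset.le_sup' _ (Finset.mem_univ i)) hεpos.le
      _ = mn := by rw [hε, div_mul_cancel₀ _ hmxpos.ne']
      _ ≤ (C *ᵥ x) i := Finset.inf'_le _ (Finset.mem_univ i)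
    rw [h1]
    have h3 : (r + ε) * w' i = r * w' i + ε * w' i := by ring
    rw [h3]
    linarith [h2]
  set s := ∑ i, w i with hs
  have hspos : 0 < s :=
    Finset.sum_pos (fun i _ => hw i) hune
  set u₁ := s⁻¹ • w with hu₁
  have hm1 : ∀ i, 0 ≤ u₁ i := fun i => by
    simp only [hu₁, Pi.smul_apply, smul_eq_mul]
    exact mul_nonneg (inv_nonneg.mpr hspos.le) (hw i).le
  have hm2 : ∑ i, u₁ i = 1 := by
    simp only [hu₁, Pi.smul_apply, smul_eq_mul]
    rw [← Finset.mul_sum, ← hs, inv_mul_cancel₀ hspos.ne']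
  have hCu₁ : C *ᵥ u₁ = s⁻¹ • w' := by
    rw [hu₁, Matrix.mulVec_smul, hw'def]
  have hcon1 : ∀ i, (r + ε) * (C *ᵥ u₁) i ≤ (B' *ᵥ (C *ᵥ u₁)) i := by
    intro i
    rw [hCu₁, Matrix.mulVec_smul]
    simp only [Pi.smul_apply, smul_eq_mul]
    have := hstep i
    have hsinv : (0:ℝ) ≤ s⁻¹ := by positivity
    calc (r + ε) * (s⁻¹ * w' i) = s⁻¹ * ((r + ε) * w' i) := by ring
    _ ≤ s⁻¹ * (B' *ᵥ w') i := mul_le_mul_of_nonneg_left (hstep i) hsinv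
  have hle : r + ε ≤ R₀ := hapr u₁ hm1 hm2 (r + ε) hcon1
  have hr0' : (0:ℝ) ≤ r := hr0
  have hmemT : (u₁, r + ε) ∈ T :=
    ⟨hm1, hm2, show (0:ℝ) ≤ r + ε by linarith, show r + ε ≤ R₀ + 1 by linarith, hcon1⟩
  have hfin : r + ε ≤ r := hmax _ hmemT
  linarith

lemma r_mem_spectrum {B : Matrix (Fin n) (Fin n) ℝ} {w : Fin n → ℝ} {r : ℝ}
    (hwne : w ≠ 0) (hBw : Bᵀ *ᵥ w = r • w) :
    (r : ℂ) ∈ spectrum ℂ (B.map Complex.ofReal) := by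
  rw [mem_spec_iff_det]
  have hdetR : ((r • (1 : Matrix (Fin n) (Fin n) ℝ) - Bᵀ)).det = 0 := by
    rw [← Matrix.exists_mulVec_eq_zero_iff]
    refine ⟨w, hwne, ?_⟩
    rw [Matrix.sub_mulVec, Matrix.smul_mulVec, Matrix.one_mulVec, hBw, sub_self]
  have hdetR2 : ((r • (1 : Matrix (Fin n) (Fin n) ℝ) - B)).det = 0 := by
    rw [← Matrix.det_transpose]
    rwa [Matrix.transpose_sub, Matrix.transpose_smul, Matrix.transpose_one]
  have hmap : (r : ℂ) • (1 : Matrix (Fin n) (Fin n) ℂ) - B.map Complex.ofReal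
      = ((r • (1 : Matrix (Fin n) (Fin n) ℝ) - B)).map Complex.ofReal := by
    ext i j
    by_cases h : i = j <;>
      simp [h, Matrix.map_apply, Matrix.one_apply, Matrix.sub_apply, Matrix.smul_apply]
  rw [hmap]
  have := RingHom.map_det Complex.ofRealHom (r • (1 : Matrix (Fin n) (Fin n) ℝ) - B)
  rw [hdetR2] at this
  exact (by simpa using this.symm : ((r • (1 : Matrix (Fin n) (Fin n) ℝ) - B).map Complex.ofRealHom).det = 0)

lemma re_lt_of_le (hn : 0 < n) {A B : Matrix (Fin n) (Fin n) ℝ}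
    (hA : ∀ i j, 0 ≤ A i j) (hAB : ∀ i j, A i j ≤ B i j) (hne : A ≠ B)
    (hirr : MatIrreducible B) {w : Fin n → ℝ} {r : ℝ}
    (hw : ∀ i, 0 < w i) (hr0 : 0 ≤ r) (hBw : Bᵀ *ᵥ w = r • w)
    {μ : ℂ} (hμ : μ ∈ spectrum ℂ (A.map Complex.ofReal)) : μ.re < r := by
  have hBnn : ∀ i j, 0 ≤ B i j := fun i j => (hA i j).trans (hAB i j)
  obtain ⟨v, hvne, hv⟩ := (Matrix.exists_mulVec_eq_zero_iff).mpr
    ((mem_spec_iff_det _ _).mp hμ)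
  have hAv : (A.map Complex.ofReal) *ᵥ v = μ • v := by
    rw [Matrix.sub_mulVec, Matrix.smul_mulVec, Matrix.one_mulVec, sub_eq_zero] at hv
    exact hv.symm
  set u : Fin n → ℝ := fun i => ‖v i‖ with hudef
  have hu : ∀ i, 0 ≤ u i := fun i => norm_nonneg _
  have hune : u ≠ 0 := by
    obtain ⟨i, hi⟩ := Function.ne_iff.mp hvne
    intro hc
    have : u i = 0 := by rw [hc]; rfl
    exact hi (by simpa [hudef, _root_.map_eq_zero] using this)
  have hkey1 : ∀ i, ‖μ‖ * u i ≤ (A *ᵥ u) i := by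
    intro i
    have hvi : ((A.map Complex.ofReal) *ᵥ v) i = μ * v i := by
      rw [hAv]; simp
    calc ‖μ‖ * u i = ‖μ * v i‖ :=
          (norm_mul μ (v i)).symm
    _ = ‖∑ j, (A i j : ℂ) * v j‖ := by
        rw [← hvi]
        congr 1
    _ ≤ ∑ j, ‖(A i j : ℂ) * v j‖ := norm_sum_le _ _
    _ = ∑ j, A i j * u j := by
        refine Finset.sum_congr rfl fun j _ => ?_
        rw [norm_mul, Complex.norm_real, Real.norm_eq_abs, abs_of_nonneg (hA i j)]
    _ = (A *ᵥ u) i := by simp [Matrix.mulVec, dotProduct]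
  have hABu : ∀ i, (A *ᵥ u) i ≤ (B *ᵥ u) i := by
    intro i
    simp only [Matrix.mulVec, dotProduct]
    exact Finset.sum_le_sum fun j _ => mul_le_mul_of_nonneg_right (hAB i j) (hu j)
  set D := ∑ i, w i * u i with hD
  have hDpos : 0 < D := by
    obtain ⟨i, hi⟩ := Function.ne_iff.mp hune
    refine Finset.sum_pos' (fun j _ => mul_nonneg (hw j).le (hu j)) ⟨i, Finset.mem_univ i, ?_⟩
    exact mul_pos (hw i) ((hu i).lt_of_ne (Ne.symm hi))
  have h1 : ‖μ‖ * D ≤ ∑ i, w i * (A *ᵥ u) i := by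
    rw [hD, Finset.mul_sum]
    refine Finset.sum_le_sum fun i _ => ?_
    calc ‖μ‖ * (w i * u i) = w i * (‖μ‖ * u i) := by ring
    _ ≤ w i * (A *ᵥ u) i := mul_le_mul_of_nonneg_left (hkey1 i) (hw i).le
  have h2 : ∑ i, w i * (A *ᵥ u) i ≤ ∑ i, w i * (B *ᵥ u) i :=
    Finset.sum_le_sum fun i _ => mul_le_mul_of_nonneg_left (hABu i) (hw i).le
  have h3 : ∑ i, w i * (B *ᵥ u) i = r * D := by
    have lhs : ∑ i, w i * (B *ᵥ u) i = ∑ j, (∑ i, w i * B i j) * u j := by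
      simp only [Matrix.mulVec, dotProduct, Finset.mul_sum]
      rw [Finset.sum_comm]
      refine Finset.sum_congr rfl fun j _ => ?_
      rw [Finset.sum_mul]
      refine Finset.sum_congr rfl fun i _ => by ring
    have hBT : ∀ j, ∑ i, w i * B i j = r * w j := by
      intro j
      have hj := congrFun hBw j
      simp only [Matrix.mulVec, dotProduct, Matrix.transpose_apply,
        Pi.smul_apply, smul_eq_mul] at hj
      rw [← hj]
      exact Finset.sum_congr rfl fun i _ => by ring
    rw [lhs, hD, Finset.mul_sum]
    refine Finset.sum_congr rfl fun j _ => ?_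
    rw [hBT j]
    ring
  have habs : ‖μ‖ ≤ r :=
    le_of_mul_le_mul_right (h1.trans (h2.trans_eq h3)) hDpos
  by_contra hcon
  push_neg at hcon
  have hreabs : μ.re ≤ ‖μ‖ := Complex.re_le_norm μ
  have habs2 : ‖μ‖ = r := le_antisymm habs (by linarith)
  -- equality analysis
  have e1 : ∑ i, w i * (A *ᵥ u) i = r * D := by
    refine le_antisymm (h2.trans_eq h3) ?_
    rw [← habs2]
    exact h1
  have e2 : ∀ i, (A *ᵥ u) i = r * u i := by
    have hsum : ∑ i, w i * ((A *ᵥ u) i - r * u i) = 0 := by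
      simp only [mul_sub, Finset.sum_sub_distrib]
      rw [e1, hD, Finset.mul_sum]
      rw [sub_eq_zero]
      exact Finset.sum_congr rfl fun i _ => by ring
    intro i
    have hterm := (Finset.sum_eq_zero_iff_of_nonneg (fun j _ => ?_)).mp hsum i (Finset.mem_univ i)
    · have := mul_eq_zero.mp hterm
      rcases this with h | h
      · exact absurd h (hw i).ne'
      · linarith [sub_eq_zero.mp (by linarith [h] : (A *ᵥ u) i - r * u i = 0)]
    · have := hkey1 j
      rw [habs2] at this
      exact mul_nonneg (hw j).le (by linarith)
  have e4 : ∀ i, (B *ᵥ u) i = r * u i := by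
    have hsum : ∑ i, w i * ((B *ᵥ u) i - (A *ᵥ u) i) = 0 := by
      simp only [mul_sub, Finset.sum_sub_distrib]
      rw [e1, h3, sub_self]
    intro i
    have hterm := (Finset.sum_eq_zero_iff_of_nonneg (fun j _ =>
      mul_nonneg (hw j).le (by linarith [hABu j]))).mp hsum i (Finset.mem_univ i)
    have := mul_eq_zero.mp hterm
    rcases this with h | h
    · exact absurd h (hw i).ne'
    · have := sub_eq_zero.mp h
      rw [this, e2 i]
  have e5 : ∀ i, 0 < u i := by
    by_contra hc
    push_neg at hc
    obtain ⟨i0, hi0⟩ := hc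
    have hi0' : u i0 = 0 := le_antisymm hi0 (hu i0)
    have hSne : (Finset.univ.filter fun i => u i ≠ 0).Nonempty := by
      obtain ⟨j, hj⟩ := Function.ne_iff.mp hune
      exact ⟨j, by simpa using hj⟩
    have hSuniv : (Finset.univ.filter fun i => u i ≠ 0) ≠ Finset.univ := by
      intro hcc
      have : i0 ∈ Finset.univ.filter fun i => u i ≠ 0 := by
        rw [hcc]; exact Finset.mem_univ _
      simp only [Finset.mem_filter] at this
      exact this.2 hi0'
    obtain ⟨i, hi, j, hj, hBji⟩ := hirr _ hSne hSuniv
    simp only [Finset.mem_filter, Finset.mem_univ, true_and] at hi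
    have hju : u j = 0 := by
      by_contra hcc
      exact hj (by simpa using hcc)
    have hpos : 0 < B j i * u i :=
      mul_pos ((hBnn j i).lt_of_ne (Ne.symm hBji)) ((hu i).lt_of_ne (Ne.symm hi))
    have hle := single_le_mulVec hBnn hu j i
    rw [e4 j, hju, mul_zero] at hle
    linarith
  have e6 : A = B := by
    ext i j
    have hsum : ∑ l, (B i l - A i l) * u l = 0 := by
      have : ∑ l, (B i l - A i l) * u l = (B *ᵥ u) i - (A *ᵥ u) i := by
        simp only [Matrix.mulVec, dotProduct, sub_mul, Finset.sum_sub_distrib]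
      rw [this, e4 i, e2 i, sub_self]
    have hterm := (Finset.sum_eq_zero_iff_of_nonneg (fun l _ =>
      mul_nonneg (by linarith [hAB i l]) (hu l))).mp hsum j (Finset.mem_univ j)
    have := mul_eq_zero.mp hterm
    rcases this with h | h
    · linarith [sub_eq_zero.mp h]
    · exact absurd h (e5 j).ne'
  exact hne e6

lemma specBound_lt (hn : 0 < n) {A B : Matrix (Fin n) (Fin n) ℝ}
    (hA : ∀ i j, 0 ≤ A i j) (hAB : ∀ i j, A i j ≤ B i j) (hne : A ≠ B)
    (hirr : MatIrreducible B) : specBound A < specBound B := by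
  have hBnn : ∀ i j, 0 ≤ B i j := fun i j => (hA i j).trans (hAB i j)
  have hBTnn : ∀ i j, 0 ≤ Bᵀ i j := fun i j => hBnn j i
  obtain ⟨w, r, hw, hr0, hBw⟩ := exists_pos_eigenvector hn hBTnn (irr_transpose hirr)
  have hwne : w ≠ 0 := by
    intro hc
    have := hw ⟨0, hn⟩
    rw [hc] at this
    exact lt_irrefl _ this
  obtain ⟨μ₀, hμ₀, hre⟩ := specBound_mem hn A
  have h1 : specBound A < r := hre ▸ re_lt_of_le hn hA hAB hne hirr hw hr0 hBw hμ₀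
  have h2 : r ≤ specBound B := by
    have := re_le_specBound B (r_mem_spectrum hwne hBw)
    simpa using this
  linarith

lemma spec_shift (M : Matrix (Fin n) (Fin n) ℝ) (c : ℝ) (μ : ℂ) :
    μ ∈ spectrum ℂ ((M + c • 1).map Complex.ofReal)
      ↔ (μ - c) ∈ spectrum ℂ (M.map Complex.ofReal) := by
  rw [mem_spec_iff_det, mem_spec_iff_det]
  have h : μ • (1 : Matrix (Fin n) (Fin n) ℂ) - (M + c • 1).map Complex.ofReal
      = (μ - c) • (1 : Matrix (Fin n) (Fin n) ℂ) - M.map Complex.ofReal := by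
    ext i j
    by_cases h : i = j <;>
      simp [h, Matrix.map_apply, Matrix.one_apply, Matrix.add_apply, Matrix.smul_apply] <;>
      ring
  rw [h]

lemma specBound_shift (hn : 0 < n) (M : Matrix (Fin n) (Fin n) ℝ) (c : ℝ) :
    specBound (M + c • 1) = specBound M + c := by
  apply le_antisymm
  · obtain ⟨ν, hν, hre⟩ := specBound_mem hn (M + c • 1)
    rw [← hre]
    have h2 := re_le_specBound M ((spec_shift M c ν).mp hν)
    have h3 : (ν - (c:ℂ)).re = ν.re - c := by simp
    linarith [h3 ▸ h2]
  · obtain ⟨μ, hμ, hre⟩ := specBound_mem hn M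
    have hmem : (μ + c) ∈ spectrum ℂ ((M + c • 1).map Complex.ofReal) :=
      (spec_shift M c (μ + c)).mpr (by simpa using hμ)
    have := re_le_specBound (M + c • 1) hmem
    have h3 : ((μ + (c:ℂ))).re = μ.re + c := by simp
    linarith [h3 ▸ this]

theorem specBound_add_nonneg_lt {n : ℕ} (hn : 0 < n)
    (P Q : Matrix (Fin n) (Fin n) ℝ)
    (hP : ∀ i j, i ≠ j → 0 ≤ P i j)
    (hQ : ∀ i j, 0 ≤ Q i j) (hQne : Q ≠ 0)
    (hirr : MatIrreducible (P + Q)) :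
    specBound P < specBound (P + Q) := by
  set c := ∑ i, |P i i| with hc
  have hcle : ∀ i, |P i i| ≤ c :=
    fun i => Finset.single_le_sum (f := fun i => |P i i|) (fun j _ => abs_nonneg _) (Finset.mem_univ i)
  set A := P + c • (1 : Matrix (Fin n) (Fin n) ℝ) with hA
  set B := A + Q with hB
  have hAnn : ∀ i j, 0 ≤ A i j := by
    intro i j
    by_cases h : i = j
    · subst h
      simp only [hA, Matrix.add_apply, Matrix.smul_apply, Matrix.one_apply_eq, smul_eq_mul,
        mul_one]
      linarith [hcle i, neg_abs_le (P i i)]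
    · simp only [hA, Matrix.add_apply, Matrix.smul_apply, Matrix.one_apply_ne h, smul_eq_mul,
        mul_zero, add_zero]
      exact hP i j h
  have hABle : ∀ i j, A i j ≤ B i j := by
    intro i j
    simp only [hB, Matrix.add_apply]
    linarith [hQ i j]
  have hneAB : A ≠ B := by
    intro hcon
    apply hQne
    have := hcon
    rw [hB] at this
    exact (left_eq_add.mp this)
  have hBPQ : B = (P + Q) + c • (1 : Matrix (Fin n) (Fin n) ℝ) := by
    rw [hB, hA]
    abel
  have hirrB : MatIrreducible B := by
    intro S h1 h2
    obtain ⟨i, hi, j, hj, hij⟩ := hirr S h1 h2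
    refine ⟨i, hi, j, hj, ?_⟩
    have hjine : j ≠ i := fun hc => hj (hc ▸ hi)
    rw [hBPQ]
    simp only [Matrix.add_apply, Matrix.smul_apply, Matrix.one_apply_ne hjine, smul_eq_mul,
      mul_zero, add_zero]
    exact hij
  have hmain := specBound_lt hn hAnn hABle hneAB hirrB
  rw [hA] at hmain
  rw [hBPQ] at hmain
  rw [specBound_shift hn P c, specBound_shift hn (P + Q) c] at hmain
  linarith

end PFaux
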